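/- Let A be an n×n complex matrix all of whose eigenvalues have magnitude at most 1. Then for every positive integer L, the operator norm of A^L satisfies ‖A^L‖ ≤ n · (2(1 + ‖A‖)L)^n. -/

import Mathlib

open Polynomial

noncomputable section PowBoundAux

namespace PowBoundAux

/-- Tower of quotients of `X^L` by successive linear factors. -/
def q (L : ℕ) (l : ℕ → ℂ) : ℕ → ℂ[X]
  | 0 => X ^ L
  | (k+1) => q L l k /ₘ (X - C (l k))

lemma q_succ_eq (L : ℕ) (l : ℕ → ℂ) (k : ℕ) :
    q L l k = (X - C (l k)) * q L l (k+1) + C ((q L l k).eval (l k)) := by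
  conv_lhs => rw [← modByMonic_add_div (q L l k) (X - C (l k))]
  rw [modByMonic_X_sub_C_eq_C_eval, show q L l (k+1) = q L l k /ₘ (X - C (l k)) from rfl]
  ring

lemma key_identity (L : ℕ) (l : ℕ → ℂ) (m : ℕ) :
    (X : ℂ[X]) ^ L = (∏ j ∈ Finset.range m, (X - C (l j))) * q L l m
      + ∑ k ∈ Finset.range m, C ((q L l k).eval (l k)) * ∏ j ∈ Finset.range k, (X - C (l j)) := by
  induction m with
  | zero => simp [q]
  | succ m ih =>
    rw [Finset.prod_range_succ, Finset.sum_range_succ, ih]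
    nth_rewrite 1 [q_succ_eq L l m]
    ring

lemma q_natDegree (L : ℕ) (l : ℕ → ℂ) : ∀ k, (q L l k).natDegree ≤ L
  | 0 => by simp [q, natDegree_X_pow]
  | (k+1) => by
    rw [q, natDegree_divByMonic _ (monic_X_sub_C (l k))]
    exact le_trans (Nat.sub_le _ _) (q_natDegree L l k)

/-- Sum of the absolute values of coefficients. -/
def B (L : ℕ) (l : ℕ → ℂ) (k : ℕ) : ℝ :=
  ∑ i ∈ Finset.range (L+1), ‖(q L l k).coeff i‖

lemma coeff_abs_le (L : ℕ) (l : ℕ → ℂ) (hl : ∀ j, ‖l j‖ ≤ 1) (k i : ℕ) :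
    ‖(q L l (k+1)).coeff i‖ ≤ B L l k := by
  rw [show q L l (k+1) = q L l k /ₘ (X - C (l k)) from rfl,
    coeff_divByMonic_X_sub_C]
  refine le_trans (norm_sum_le _ _) ?_
  have hsub : Finset.Icc (i+1) (q L l k).natDegree ⊆ Finset.range (L+1) := by
    intro j hj
    rw [Finset.mem_Icc] at hj
    rw [Finset.mem_range]
    exact Nat.lt_succ_of_le (le_trans hj.2 (q_natDegree L l k))
  refine le_trans (Finset.sum_le_sum (fun j _ => ?_)) (Finset.sum_le_sum_of_subset_of_nonneg hsub
    (fun j _ _ => norm_nonneg _))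
  rw [norm_mul, norm_pow]
  calc ‖l k‖ ^ (j - (i+1)) * ‖(q L l k).coeff j‖
      ≤ 1 ^ (j - (i+1)) * ‖(q L l k).coeff j‖ := by
        gcongr; exact hl k
    _ = ‖(q L l k).coeff j‖ := by rw [one_pow, one_mul]

lemma B_le (L : ℕ) (l : ℕ → ℂ) (hl : ∀ j, ‖l j‖ ≤ 1) (k : ℕ) :
    B L l k ≤ (L+1 : ℝ) ^ k := by
  induction k with
  | zero =>
    simp only [B, pow_zero, q]
    have : ∀ i ∈ Finset.range (L+1), ‖(X ^ L : ℂ[X]).coeff i‖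
        = if i = L then 1 else 0 := by
      intro i _
      rw [coeff_X_pow]
      split <;> simp_all
    rw [Finset.sum_congr rfl this, Finset.sum_ite_eq' (Finset.range (L+1)) L (fun _ => (1:ℝ))]
    simp
  | succ k ih =>
    calc B L l (k+1) ≤ ∑ _i ∈ Finset.range (L+1), B L l k :=
          Finset.sum_le_sum (fun i _ => coeff_abs_le L l hl k i)
      _ = (L+1 : ℝ) * B L l k := by
          rw [Finset.sum_const, Finset.card_range]; ring
      _ ≤ (L+1 : ℝ) * (L+1:ℝ)^k := by
          have hB : (0:ℝ) ≤ (L+1:ℝ) := by positivity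
          exact mul_le_mul_of_nonneg_left ih hB
      _ = (L+1 : ℝ) ^ (k+1) := by ring

lemma eval_abs_le (L : ℕ) (l : ℕ → ℂ) (hl : ∀ j, ‖l j‖ ≤ 1) (k : ℕ) :
    ‖(q L l k).eval (l k)‖ ≤ (L+1 : ℝ) ^ k := by
  refine le_trans ?_ (B_le L l hl k)
  rw [eval_eq_sum_range' (Nat.lt_succ_of_le (q_natDegree L l k))]
  refine le_trans (norm_sum_le _ _) (Finset.sum_le_sum (fun i _ => ?_))
  rw [norm_mul, norm_pow]
  calc ‖(q L l k).coeff i‖ * ‖l k‖ ^ i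
      ≤ ‖(q L l k).coeff i‖ * 1 ^ i := by
        gcongr; exact hl k
    _ = ‖(q L l k).coeff i‖ := by rw [one_pow, mul_one]

lemma list_prod_map {M : Type*} [CommMonoid M] (t : List ℂ) (f : ℂ → M) :
    (t.map f).prod = ∏ j ∈ Finset.range t.length, f (t.getD j 0) := by
  induction t with
  | nil => simp
  | cons a t ih =>
    rw [List.map_cons, List.prod_cons, List.length_cons, Finset.prod_range_succ']
    simp only [List.getD_cons_succ, List.getD_cons_zero]
    rw [ih, mul_comm]

end PowBoundAux

end PowBoundAux

open scoped Matrix.Norms.L2Operator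

/-- If all eigenvalues (roots of the characteristic polynomial) of a complex
`n × n` matrix `A` have magnitude at most `1`, then for every positive integer `L`, the operator
(spectral) norm of `A ^ L` satisfies `‖A ^ L‖ ≤ n * (2 * (1 + ‖A‖) * L) ^ n`. -/
theorem powering_bound (n : ℕ) (A : Matrix (Fin n) (Fin n) ℂ)
    (hA : ∀ μ ∈ A.charpoly.roots, ‖μ‖ ≤ 1)
    (L : ℕ) (hL : 0 < L) :
    ‖A ^ L‖ ≤ (n : ℝ) * (2 * (1 + ‖A‖) * (L : ℝ)) ^ n := by
  rcases Nat.eq_zero_or_pos n with hn | hn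
  · subst hn
    have : A ^ L = 0 := Subsingleton.elim _ _
    rw [this, norm_zero]
    simp
  -- n ≥ 1
  haveI : Nonempty (Fin n) := ⟨⟨0, hn⟩⟩
  haveI : Nontrivial (Matrix (Fin n) (Fin n) ℂ) := inferInstance
  haveI : NormOneClass (Matrix (Fin n) (Fin n) ℂ) := ⟨CStarRing.norm_one⟩
  -- roots of charpoly
  have hsplit : Polynomial.Splits A.charpoly :=
    IsAlgClosed.splits A.charpoly
  have hdeg : A.charpoly.natDegree = n := by
    rw [Matrix.charpoly_natDegree_eq_dim, Fintype.card_fin]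
  have hcard : Multiset.card A.charpoly.roots = n := by
    rw [(Polynomial.splits_iff_card_roots).mp hsplit, hdeg]
  have hprod : (A.charpoly.roots.map fun a => Polynomial.X - Polynomial.C a).prod = A.charpoly :=
    Polynomial.prod_multiset_X_sub_C_of_monic_of_roots_card_eq A.charpoly_monic
      (by rw [hcard, hdeg])
  set t : List ℂ := A.charpoly.roots.toList with ht
  have htlen : t.length = n := by rw [ht, Multiset.length_toList, hcard]
  set l : ℕ → ℂ := fun j => t.getD j 0 with hldef
  have hl : ∀ j, ‖l j‖ ≤ 1 := by
    intro j
    by_cases hj : j < t.length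
    · have hmem : t.get ⟨j, hj⟩ ∈ A.charpoly.roots := by
        rw [← Multiset.mem_toList]; exact t.get_mem ⟨j, hj⟩
      rw [hldef]
      simp only [List.getD_eq_getElem t 0 hj]
      exact hA _ hmem
    · rw [hldef]; simp only [List.getD_eq_default t 0 (le_of_not_gt hj)]
      simp
  -- the product of linear factors is the charpoly
  have hprodrange : (∏ j ∈ Finset.range t.length, (Polynomial.X - Polynomial.C (l j)))
      = A.charpoly := by
    rw [← PowBoundAux.list_prod_map t (fun a => Polynomial.X - Polynomial.C a),
      ← Multiset.prod_coe, ← Multiset.map_coe, ht, Multiset.coe_toList, hprod]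
  rw [htlen] at hprodrange
  -- apply `aeval A` to the key identity, using Cayley-Hamilton
  have hAL : A ^ L = ∑ k ∈ Finset.range n,
      (algebraMap ℂ (Matrix (Fin n) (Fin n) ℂ) ((PowBoundAux.q L l k).eval (l k)))
        * Polynomial.aeval A (∏ j ∈ Finset.range k, (Polynomial.X - Polynomial.C (l j))) := by
    have h := congrArg (Polynomial.aeval A) (PowBoundAux.key_identity L l n)
    rw [map_pow, Polynomial.aeval_X, map_add, map_mul, hprodrange,
      Matrix.aeval_self_charpoly, zero_mul, zero_add, map_sum] at h
    rw [h]
    refine Finset.sum_congr rfl (fun k _ => ?_)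
    rw [map_mul, Polynomial.aeval_C]
  -- norm bound for the linear-factor products
  have hprodnorm : ∀ k, ‖Polynomial.aeval A
      (∏ j ∈ Finset.range k, (Polynomial.X - Polynomial.C (l j)))‖ ≤ (1 + ‖A‖) ^ k := by
    intro k
    induction k with
    | zero => simp
    | succ k ih =>
      rw [Finset.prod_range_succ, map_mul, pow_succ]
      refine le_trans (norm_mul_le _ _) (mul_le_mul ih ?_ (norm_nonneg _) (by positivity))
      rw [map_sub, Polynomial.aeval_X, Polynomial.aeval_C]
      refine le_trans (norm_sub_le _ _) ?_
      rw [norm_algebraMap']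
      have := hl k
      linarith
  -- put everything together
  have hc1 : (1:ℝ) ≤ 2 * (1 + ‖A‖) * L := by
    have hL1 : (1:ℝ) ≤ L := by exact_mod_cast hL
    nlinarith [norm_nonneg A]
  calc ‖A ^ L‖ ≤ ∑ k ∈ Finset.range n,
        ‖(algebraMap ℂ (Matrix (Fin n) (Fin n) ℂ) ((PowBoundAux.q L l k).eval (l k)))
          * Polynomial.aeval A (∏ j ∈ Finset.range k, (Polynomial.X - Polynomial.C (l j)))‖ := by
        rw [hAL]; exact norm_sum_le _ _
    _ ≤ ∑ k ∈ Finset.range n, (2 * (1 + ‖A‖) * L) ^ n := by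
        refine Finset.sum_le_sum (fun k hk => ?_)
        have hk' : k ≤ n := le_of_lt (Finset.mem_range.mp hk)
        have h1 : ‖(algebraMap ℂ (Matrix (Fin n) (Fin n) ℂ)
            ((PowBoundAux.q L l k).eval (l k)))‖ ≤ (L+1:ℝ) ^ k := by
          rw [norm_algebraMap']
          exact PowBoundAux.eval_abs_le L l hl k
        calc ‖_ * _‖ ≤ (L+1:ℝ) ^ k * (1 + ‖A‖) ^ k :=
              le_trans (norm_mul_le _ _)
                (mul_le_mul h1 (hprodnorm k) (norm_nonneg _) (by positivity))
          _ = ((L+1) * (1 + ‖A‖)) ^ k := by rw [mul_pow]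
          _ ≤ (2 * (1 + ‖A‖) * L) ^ k := by
              refine pow_le_pow_left₀ (by positivity) ?_ k
              have hL1 : (1:ℝ) ≤ L := by exact_mod_cast hL
              nlinarith [norm_nonneg A]
          _ ≤ (2 * (1 + ‖A‖) * L) ^ n := pow_le_pow_right₀ hc1 hk'
    _ = (n : ℝ) * (2 * (1 + ‖A‖) * (L : ℝ)) ^ n := by
        rw [Finset.sum_const, Finset.card_range, nsmul_eq_mul]
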